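/- Fix N ≥ 1, M ≥ 1 and ε = (ε₀,…,ε_{N−1}) ∈ {0,1}^N. Let q_i^{(t)}, q_i^{(t+M)} (0 ≤ i ≤ N−1) and e_i^{(t)}, e_i^{(t+1)} (0 ≤ i ≤ N−2) be elements of a field, with the conventions e_{−1}^{(t)} = e_{−1}^{(t+1)} = e_{N−1}^{(t)} = 0. Build R^{(t)} = R(q^{(t)}), R^{(t+M)} = R(q^{(t+M)}), and L₁^{(t)}, L₂^{(t)} from (ε, e^{(t)}) and L₁^{(t+1)}, L₂^{(t+1)} from (ε, e^{(t+1)}) as in the context. Then the matrix equation L₁^{(t+1)} L₂^{(t+1)} R^{(t+M)} = R^{(t)} L₁^{(t)} L₂^{(t)} holds if and only if q_i^{(t+M)} = q_i^{(t)} + e_i^{(t)} − e_{i−1}^{(t+1)} for all 0 ≤ i ≤ N−1 and e_i^{(t+1)} (q_i^{(t+M)} + ε_i e_{i−1}^{(t+1)}) = e_i^{(t)} (q_{i+1}^{(t)} + ε_{i+1} e_{i+1}^{(t)}) for all 0 ≤ i ≤ N−2. -/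
import Mathlib

open Finset

section Aux

variable {F : Type*} [Field F]

/-- Closed form for the entries of `L1 * L2`, as a function on `ℕ`. -/
def kf (ε e : ℕ → F) (a c : ℕ) : F :=
  if a = c then 1 else if c < a then e c * ∏ b ∈ Finset.Ico (c+1) a, (ε b * e b) else 0

lemma kf_self (ε e : ℕ → F) (a : ℕ) : kf ε e a a = 1 := by
  unfold kf; rw [if_pos rfl]

lemma kf_eq_zero (ε e : ℕ → F) {a c : ℕ} (h : a < c) : kf ε e a c = 0 := by
  unfold kf; rw [if_neg (by omega), if_neg (by omega)]

lemma kf_of_lt (ε e : ℕ → F) {a c : ℕ} (h : c < a) :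
    kf ε e a c = e c * ∏ b ∈ Finset.Ico (c+1) a, (ε b * e b) := by
  unfold kf; rw [if_neg (by omega), if_pos h]

lemma kf_rec (ε e : ℕ → F) (a c : ℕ) :
    kf ε e (a+1) c = ε a * e a * kf ε e a c
      + (if a + 1 = c then 1 else 0) + (if a = c then (1 - ε c) * e c else 0) := by
  unfold kf
  rcases lt_trichotomy a c with h | rfl | h
  · rcases eq_or_lt_of_le (Nat.succ_le_of_lt h) with h1 | h1
    · rw [if_pos h1, if_pos h1, if_neg (by omega), if_neg (by omega), if_neg (by omega)]
      ring
    · rw [if_neg (by omega), if_neg (by omega), if_neg (by omega), if_neg (by omega),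
        if_neg (by omega), if_neg (by omega)]
      ring
  · rw [if_neg (by omega), if_pos (by omega), if_pos rfl, if_neg (by omega), if_pos rfl,
      (by omega : a + 1 = a + 1), Finset.Ico_self, Finset.prod_empty]
    ring
  · rw [if_neg (by omega), if_pos (by omega), if_neg (by omega), if_pos h,
      if_neg (by omega), if_neg (by omega), Finset.prod_Ico_succ_top (by omega : c+1 ≤ a)]
    ring

lemma kf_rec' (ε e : ℕ → F) (a c : ℕ) :
    kf ε e a c - (if 1 ≤ a then ε (a-1) * e (a-1) * kf ε e (a-1) c else 0)
      = (if a = c then 1 else 0) + (if a = (c:ℕ)+1 then (1-ε c)*e c else 0) := by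
  cases a with
  | zero =>
      unfold kf
      split_ifs <;> first | omega | (exfalso; assumption) | ring
  | succ n =>
      rw [if_pos (by omega), Nat.add_sub_cancel, kf_rec]
      have : (n = c) ↔ (n + 1 = c + 1) := by omega
      rw [if_congr this rfl rfl]
      ring

lemma sum_delta_eq {N : ℕ} (c : Fin N) (g : Fin N → F) :
    (∑ b : Fin N, if (b:ℕ) = (c:ℕ) then g b else 0) = g c := by
  rw [Finset.sum_eq_single c]
  · simp
  · intro b _ hb
    rw [if_neg (fun h => hb (Fin.ext h))]
  · simp

lemma sum_delta_pred {N : ℕ} (c : Fin N) (g : ℕ → F) :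
    (∑ b : Fin N, if (c:ℕ) = (b:ℕ)+1 then g b else 0)
      = if 1 ≤ (c:ℕ) then g ((c:ℕ)-1) else 0 := by
  by_cases h : 1 ≤ (c:ℕ)
  · rw [if_pos h, Finset.sum_eq_single (⟨(c:ℕ)-1, by omega⟩ : Fin N)]
    · simp [Nat.sub_add_cancel h]
    · intro b _ hb
      rw [if_neg]
      intro hc
      exact hb (Fin.ext (by simp; omega))
    · simp
  · rw [if_neg h]
    apply Finset.sum_eq_zero
    intro b _
    rw [if_neg (by omega)]

lemma sum_delta_succ {N : ℕ} (a : Fin N) (g : ℕ → F) :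
    (∑ b : Fin N, if (b:ℕ) = (a:ℕ)+1 then g b else 0)
      = if (a:ℕ)+1 < N then g ((a:ℕ)+1) else 0 := by
  by_cases h : (a:ℕ)+1 < N
  · rw [if_pos h, Finset.sum_eq_single (⟨(a:ℕ)+1, h⟩ : Fin N)]
    · simp
    · intro b _ hb
      rw [if_neg]
      intro hc
      exact hb (Fin.ext (by simpa using hc))
    · simp
  · rw [if_neg h]
    apply Finset.sum_eq_zero
    intro b _
    rw [if_neg (by omega)]

end Aux

/-- `R(q)`: upper bidiagonal matrix with diagonal `q₀,…,q_{N-1}` and superdiagonal `1`. -/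
def Rm {F : Type*} [Field F] (N : ℕ) (q : ℕ → F) : Matrix (Fin N) (Fin N) F :=
  Matrix.of fun a b => if (a : ℕ) = (b : ℕ) then q a
    else if (b : ℕ) = (a : ℕ) + 1 then 1 else 0

/-- `L₁`: the inverse of `I - Σ_{a=1}^{N-1} ε_{a-1} e_{a-1} E_{a+1,a}`. -/
noncomputable def L1m {F : Type*} [Field F] (N : ℕ) (ε : ℕ → F) (e : ℕ → F) :
    Matrix (Fin N) (Fin N) F :=
  (1 - Matrix.of fun a b : Fin N =>
    if (a : ℕ) = (b : ℕ) + 1 then ε b * e b else 0)⁻¹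

/-- `L₂ = I + Σ_{a=1}^{N-1} (1-ε_{a-1}) e_{a-1} E_{a+1,a}`. -/
def L2m {F : Type*} [Field F] (N : ℕ) (ε : ℕ → F) (e : ℕ → F) :
    Matrix (Fin N) (Fin N) F :=
  1 + Matrix.of fun a b : Fin N =>
    if (a : ℕ) = (b : ℕ) + 1 then (1 - ε b) * e b else 0

section Aux2

variable {F : Type*} [Field F]

lemma L1m_mul_L2m (N : ℕ) (ε e : ℕ → F) :
    L1m N ε e * L2m N ε e = Matrix.of (fun a c : Fin N => kf ε e a c) := by
  set Nm : Matrix (Fin N) (Fin N) F := Matrix.of fun a b : Fin N =>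
    if (a : ℕ) = (b : ℕ) + 1 then ε b * e b else 0 with hNm
  set K : Matrix (Fin N) (Fin N) F := Matrix.of (fun a c : Fin N => kf ε e a c) with hK
  have hdet : IsUnit (1 - Nm).det := by
    rw [Matrix.det_of_lowerTriangular _ (by
      intro i j hij
      have hij' : (i : Fin N) < j := hij
      simp only [Nm, Matrix.sub_apply, Matrix.one_apply, Matrix.of_apply]
      rw [if_neg (Fin.ne_of_lt hij'), if_neg (by have := Fin.lt_iff_val_lt_val.mp hij'; omega)]
      ring)]
    simp [Nm, Matrix.one_apply]
  have hAK : (1 - Nm) * K = L2m N ε e := by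
    rw [sub_mul, one_mul]
    ext a c
    have hNK : (Nm * K) a c
        = if 1 ≤ (a:ℕ) then ε ((a:ℕ)-1) * e ((a:ℕ)-1) * kf ε e ((a:ℕ)-1) (c:ℕ) else 0 := by
      rw [Matrix.mul_apply]
      rw [← sum_delta_pred a (fun n => ε n * e n * kf ε e n (c:ℕ))]
      apply Finset.sum_congr rfl
      intro b _
      simp only [Nm, K, Matrix.of_apply]
      split_ifs <;> ring
    rw [Matrix.sub_apply, hNK]
    simp only [K, L2m, Matrix.of_apply, Matrix.add_apply, Matrix.one_apply]
    rw [kf_rec' ε e (a:ℕ) (c:ℕ)]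
    congr 1
    rw [if_congr (show ((a:ℕ) = (c:ℕ)) ↔ a = c from ⟨Fin.ext, congrArg _⟩) rfl rfl]
  have h1 : L1m N ε e * (1 - Nm) = 1 := Matrix.nonsing_inv_mul _ hdet
  calc L1m N ε e * L2m N ε e = L1m N ε e * ((1 - Nm) * K) := by rw [hAK]
    _ = (L1m N ε e * (1 - Nm)) * K := by rw [Matrix.mul_assoc]
    _ = K := by rw [h1, Matrix.one_mul]

lemma KR_apply (N : ℕ) (ε e q : ℕ → F) (a c : Fin N) :
    (Matrix.of (fun a c : Fin N => kf ε e a c) * Rm N q) a c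
      = kf ε e a c * q c + (if 1 ≤ (c:ℕ) then kf ε e a ((c:ℕ)-1) else 0) := by
  rw [Matrix.mul_apply]
  have : ∀ b : Fin N, (Matrix.of (fun a c : Fin N => kf ε e a c)) a b * Rm N q b c
      = (if (b:ℕ) = (c:ℕ) then kf ε e a b * q b else 0)
        + (if (c:ℕ) = (b:ℕ)+1 then kf ε e a b else 0) := by
    intro b
    simp only [Rm, Matrix.of_apply]
    split_ifs <;> first | omega | ring
  rw [Finset.sum_congr rfl (fun b _ => this b), Finset.sum_add_distrib,
    sum_delta_eq c (fun b => kf ε e a b * q b), sum_delta_pred c (fun n => kf ε e a n)]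

lemma RK_apply (N : ℕ) (ε e q : ℕ → F) (a c : Fin N) :
    (Rm N q * Matrix.of (fun a c : Fin N => kf ε e a c)) a c
      = q a * kf ε e a c + (if (a:ℕ)+1 < N then kf ε e ((a:ℕ)+1) c else 0) := by
  rw [Matrix.mul_apply]
  have : ∀ b : Fin N, Rm N q a b * (Matrix.of (fun a c : Fin N => kf ε e a c)) b c
      = (if (b:ℕ) = (a:ℕ) then q a * kf ε e b c else 0)
        + (if (b:ℕ) = (a:ℕ)+1 then kf ε e b c else 0) := by
    intro b
    simp only [Rm, Matrix.of_apply]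
    split_ifs <;> first | omega | ring
  rw [Finset.sum_congr rfl (fun b _ => this b), Finset.sum_add_distrib,
    sum_delta_eq a (fun b => q a * kf ε e b c), sum_delta_succ a (fun n => kf ε e n c)]

end Aux2


section Aux3

variable {F : Type*} [Field F]

lemma kf_succ (ε e : ℕ → F) (a : ℕ) : kf ε e (a+1) a = e a := by
  rw [kf_of_lt _ _ (by omega), Finset.Ico_self, Finset.prod_empty, mul_one]


/-- The key induction for the entries below the first subdiagonal. -/
lemma keyI (N : ℕ) (ε : ℕ → F) (hε : ∀ i, ε i = 0 ∨ ε i = 1)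
    (qt qM : ℕ → F) (et et1 : ℤ → F)
    (E1 : ∀ i : ℕ, i < N → qM i = qt i + et (i : ℤ) - et1 ((i : ℤ) - 1))
    (E2 : ∀ i : ℕ, i + 1 < N →
        et1 (i : ℤ) * (qM i + ε i * et1 ((i : ℤ) - 1))
          = et (i : ℤ) * (qt (i + 1) + ε (i + 1) * et ((i : ℤ) + 1)))
    (c : ℕ) :
    ∀ a : ℕ, c + 1 ≤ a → a < N →
      (∏ b ∈ Finset.Ico (c+1) a, (ε b * et1 (b:ℤ))) *
          (et1 (c:ℤ) * (qM c + ε c * et1 ((c:ℤ) - 1)))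
        = (∏ b ∈ Finset.Ico (c+1) a, (ε b * et (b:ℤ))) *
          (et (c:ℤ) * (qt a + ε a * et (a:ℤ))) := by
  intro a ha
  induction a, ha using Nat.le_induction with
  | base =>
      intro hN
      rw [Finset.Ico_self, Finset.prod_empty, Finset.prod_empty, one_mul, one_mul,
        E2 c hN]
      push_cast
      ring_nf
  | succ a ha IH =>
      intro haN
      have haN' : a < N := by omega
      rw [Finset.prod_Ico_succ_top (by omega : c + 1 ≤ a),
        Finset.prod_Ico_succ_top (by omega : c + 1 ≤ a)]
      have hstep : ε a * et1 (a:ℤ) * (qt a + ε a * et (a:ℤ))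
          = ε a * et (a:ℤ) * (qt (a+1) + ε (a+1) * et ((a+1:ℕ):ℤ)) := by
        rcases hε a with h | h
        · rw [h]; ring
        · rw [h, one_mul, one_mul]
          have e2 := E2 a haN
          rw [h, one_mul] at e2
          have e1 := E1 a haN'
          have : qM a + et1 ((a:ℤ) - 1) = qt a + et (a:ℤ) := by rw [e1]; ring
          calc et1 (a:ℤ) * (qt a + et (a:ℤ)) = et1 (a:ℤ) * (qM a + et1 ((a:ℤ)-1)) := by rw [this]
            _ = et (a:ℤ) * (qt (a+1) + ε (a+1) * et ((a:ℤ)+1)) := e2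
            _ = et (a:ℤ) * (qt (a+1) + ε (a+1) * et ((a+1:ℕ):ℤ)) := by push_cast; ring_nf
      calc (∏ b ∈ Finset.Ico (c+1) a, (ε b * et1 (b:ℤ))) * (ε a * et1 (a:ℤ)) *
            (et1 (c:ℤ) * (qM c + ε c * et1 ((c:ℤ) - 1)))
          = (ε a * et1 (a:ℤ)) * ((∏ b ∈ Finset.Ico (c+1) a, (ε b * et1 (b:ℤ))) *
            (et1 (c:ℤ) * (qM c + ε c * et1 ((c:ℤ) - 1)))) := by ring
        _ = (ε a * et1 (a:ℤ)) * ((∏ b ∈ Finset.Ico (c+1) a, (ε b * et (b:ℤ))) *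
            (et (c:ℤ) * (qt a + ε a * et (a:ℤ)))) := by rw [IH haN']
        _ = (∏ b ∈ Finset.Ico (c+1) a, (ε b * et (b:ℤ))) * et (c:ℤ) *
            (ε a * et1 (a:ℤ) * (qt a + ε a * et (a:ℤ))) := by ring
        _ = (∏ b ∈ Finset.Ico (c+1) a, (ε b * et (b:ℤ))) * et (c:ℤ) *
            (ε a * et (a:ℤ) * (qt (a+1) + ε (a+1) * et ((a+1:ℕ):ℤ))) := by rw [hstep]
        _ = (∏ b ∈ Finset.Ico (c+1) a, (ε b * et (b:ℤ))) * (ε a * et (a:ℤ)) *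
            (et (c:ℤ) * (qt (a+1) + ε (a+1) * et ((a+1:ℕ):ℤ))) := by ring


lemma keyEntry (N : ℕ) (ε : ℕ → F) (hε : ∀ i, ε i = 0 ∨ ε i = 1)
    (qt qM : ℕ → F) (et et1 : ℤ → F)
    (h2 : et1 (-1) = 0) (h3 : et ((N : ℤ) - 1) = 0)
    (E1 : ∀ i : ℕ, i < N → qM i = qt i + et (i : ℤ) - et1 ((i : ℤ) - 1))
    (E2 : ∀ i : ℕ, i + 1 < N →
        et1 (i : ℤ) * (qM i + ε i * et1 ((i : ℤ) - 1))
          = et (i : ℤ) * (qt (i + 1) + ε (i + 1) * et ((i : ℤ) + 1)))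
    (a c : ℕ) (ha : a < N) (hc : c < N) :
    kf ε (fun n => et1 (n:ℤ)) a c * qM c
        + (if 1 ≤ c then kf ε (fun n => et1 (n:ℤ)) a (c-1) else 0)
      = qt a * kf ε (fun n => et (n:ℤ)) a c
        + (if a+1 < N then kf ε (fun n => et (n:ℤ)) (a+1) c else 0) := by
  have hA : ∀ d : ℕ, (if 1 ≤ d then et1 (((d - 1 : ℕ)) : ℤ) else 0) = et1 ((d:ℤ)-1) := by
    intro d
    by_cases h : 1 ≤ d
    · rw [if_pos h]
      congr 1
      omega
    · rw [if_neg h, (by omega : (d:ℤ) - 1 = -1), h2]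
  have hB : ∀ d : ℕ, d < N → (if d+1 < N then et (d:ℤ) else 0) = et (d:ℤ) := by
    intro d hd
    by_cases h : d+1 < N
    · rw [if_pos h]
    · rw [if_neg h, (by omega : (d:ℤ) = (N:ℤ) - 1), h3]
  rcases lt_trichotomy a c with hac | rfl | hca
  · -- a < c : above the diagonal
    rcases eq_or_lt_of_le (Nat.succ_le_of_lt hac) with h1 | h1
    · -- c = a + 1
      rw [kf_eq_zero _ _ hac, kf_eq_zero _ _ hac, if_pos (by omega : 1 ≤ c),
        (by omega : c - 1 = a), kf_self, if_pos (by omega : a + 1 < N),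
        (show a + 1 = c by omega), kf_self]
      ring
    · -- c > a + 1
      rw [kf_eq_zero _ _ hac, kf_eq_zero _ _ hac, if_pos (by omega : 1 ≤ c)]
      rw [kf_eq_zero _ _ (by omega : a < c - 1), kf_eq_zero _ _ h1]
      simp
  · -- a = c : diagonal
    rw [kf_self, kf_self, kf_succ]
    have hBa := hB a ha
    rw [E1 a ha]
    rw [show (if 1 ≤ a then kf ε (fun n => et1 (n:ℤ)) a (a-1) else 0)
        = (if 1 ≤ a then et1 (((a - 1 : ℕ)) : ℤ) else 0) from by
      by_cases h : 1 ≤ a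
      · rw [if_pos h, if_pos h, kf_of_lt _ _ (by omega : a - 1 < a),
          (by omega : a - 1 + 1 = a), Finset.Ico_self, Finset.prod_empty, mul_one]
      · rw [if_neg h, if_neg h]]
    rw [hA a, hBa]
    ring
  · -- c < a : below the diagonal
    have hkey := keyI N ε hε qt qM et et1 E1 E2 c a (by omega) ha
    rw [kf_of_lt _ _ hca, kf_of_lt _ _ hca, kf_of_lt _ _ (by omega : c < a + 1),
      Finset.prod_Ico_succ_top (by omega : c + 1 ≤ a)]
    rw [show (if a + 1 < N then (fun n => et (n:ℤ)) c *
          ((∏ b ∈ Finset.Ico (c+1) a, (ε b * (fun n => et (n:ℤ)) b)) * (ε a * (fun n => et (n:ℤ)) a))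
          else 0)
        = et (c:ℤ) * (∏ b ∈ Finset.Ico (c+1) a, (ε b * et (b:ℤ))) * ε a *
            (if a + 1 < N then et (a:ℤ) else 0) from by
      by_cases h : a + 1 < N
      · rw [if_pos h, if_pos h]; ring
      · rw [if_neg h, if_neg h]; ring]
    rw [hB a ha]
    by_cases h : 1 ≤ c
    · rw [if_pos h, kf_of_lt _ _ (by omega : c - 1 < a), (by omega : c - 1 + 1 = c),
        Finset.prod_eq_prod_Ico_succ_bot (by omega : c < a)]
      have hcast : ((c - 1 : ℕ) : ℤ) = (c:ℤ) - 1 := by omega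
      rw [hcast]
      linear_combination hkey
    · rw [if_neg h]
      have hc0 : c = 0 := by omega
      subst hc0
      simp only [Nat.cast_zero] at hkey ⊢
      rw [(by norm_num : (0:ℤ) - 1 = -1), h2] at hkey
      linear_combination hkey
end Aux3

/-- the Lax form of the discrete hungry elementary Toda orbits is equivalent
to the scalar evolution equations.  The parameters `e^{(t)}, e^{(t+1)}` are indexed by `ℤ`
so that the conventions `e_{-1}^{(t)} = e_{-1}^{(t+1)} = e_{N-1}^{(t)} = 0` can be imposed. -/
theorem stmt_6 {F : Type*} [Field F] (N M : ℕ) (hN : 1 ≤ N) (hM : 1 ≤ M)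
    (ε : ℕ → F) (hε : ∀ i, ε i = 0 ∨ ε i = 1)
    (qt qM : ℕ → F) (et et1 : ℤ → F)
    (h1 : et (-1) = 0) (h2 : et1 (-1) = 0) (h3 : et ((N : ℤ) - 1) = 0) :
    L1m N ε (fun b => et1 (b : ℤ)) * L2m N ε (fun b => et1 (b : ℤ)) * Rm N qM
        = Rm N qt * (L1m N ε (fun b => et (b : ℤ)) * L2m N ε (fun b => et (b : ℤ))) ↔
      ((∀ i : ℕ, i < N → qM i = qt i + et (i : ℤ) - et1 ((i : ℤ) - 1)) ∧
       (∀ i : ℕ, i + 1 < N →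
          et1 (i : ℤ) * (qM i + ε i * et1 ((i : ℤ) - 1))
            = et (i : ℤ) * (qt (i + 1) + ε (i + 1) * et ((i : ℤ) + 1)))) := by
  rw [L1m_mul_L2m, L1m_mul_L2m, ← Matrix.ext_iff]
  simp only [KR_apply, RK_apply]
  have hA : ∀ d : ℕ, (if 1 ≤ d then et1 (((d - 1 : ℕ)) : ℤ) else 0) = et1 ((d:ℤ)-1) := by
    intro d
    by_cases h : 1 ≤ d
    · rw [if_pos h]
      congr 1
      omega
    · rw [if_neg h, (by omega : (d:ℤ) - 1 = -1), h2]
  have hB : ∀ d : ℕ, d < N → (if d+1 < N then et (d:ℤ) else 0) = et (d:ℤ) := by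
    intro d hd
    by_cases h : d+1 < N
    · rw [if_pos h]
    · rw [if_neg h, (by omega : (d:ℤ) = (N:ℤ) - 1), h3]
  constructor
  · intro h
    constructor
    · -- first scalar equation, from the diagonal entries
      intro i hi
      have H := h ⟨i, hi⟩ ⟨i, hi⟩
      simp only [Fin.val_mk] at H
      rw [kf_self, kf_self, kf_succ] at H
      rw [show (if 1 ≤ i then kf ε (fun n => et1 (n:ℤ)) i (i-1) else 0)
          = (if 1 ≤ i then et1 (((i - 1 : ℕ)) : ℤ) else 0) from by
        by_cases hh : 1 ≤ i
        · rw [if_pos hh, if_pos hh, kf_of_lt _ _ (by omega : i - 1 < i),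
            (by omega : i - 1 + 1 = i), Finset.Ico_self, Finset.prod_empty, mul_one]
        · rw [if_neg hh, if_neg hh]] at H
      rw [hA i, hB i hi] at H
      linear_combination H
    · -- second scalar equation, from the subdiagonal entries
      intro i hi
      have H := h ⟨i+1, hi⟩ ⟨i, by omega⟩
      simp only [Fin.val_mk] at H
      rw [kf_succ] at H
      rw [show (if 1 ≤ i then kf ε (fun n => et1 (n:ℤ)) (i+1) (i-1) else 0)
          = et1 ((i:ℤ)-1) * (ε i * et1 (i:ℤ)) from by
        by_cases hh : 1 ≤ i
        · rw [if_pos hh, kf_of_lt _ _ (by omega : i - 1 < i + 1),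
            (by omega : i - 1 + 1 = i), Finset.prod_Ico_succ_top (by omega : i ≤ i),
            Finset.Ico_self, Finset.prod_empty, one_mul,
            (by omega : ((i - 1 : ℕ) : ℤ) = (i:ℤ) - 1)]
        · rw [if_neg hh, (by omega : (i:ℤ) - 1 = -1), h2]
          ring] at H
      rw [kf_of_lt _ _ (by omega : i < i + 1 + 1),
        Finset.prod_Ico_succ_top (by omega : i + 1 ≤ i + 1),
        Finset.Ico_self, Finset.prod_empty, one_mul] at H
      rw [kf_succ] at H
      rw [show (if i + 1 + 1 < N then et ((i:ℕ):ℤ) * (ε (i+1) * et (((i+1:ℕ)):ℤ)) else 0)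
          = et ((i:ℕ):ℤ) * ε (i+1) * (if (i+1) + 1 < N then et (((i+1:ℕ)):ℤ) else 0) from by
        by_cases hh : i + 1 + 1 < N
        · rw [if_pos hh, if_pos hh]; ring
        · rw [if_neg hh, if_neg hh]; ring] at H
      rw [hB (i+1) hi] at H
      push_cast at H ⊢
      linear_combination H
  · rintro ⟨E1, E2⟩ a c
    exact keyEntry N ε hε qt qM et et1 h2 h3 E1 E2 (a:ℕ) (c:ℕ) a.isLt c.isLt
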